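/- Let D₁, D₂, D₃ be three closed disks in ℝ² with centers c₁, c₂, c₃ and positive radii, such that each pairwise intersection Dᵢ ∩ Dⱼ has nonempty interior but the common intersection D₁ ∩ D₂ ∩ D₃ is empty. Then there exist indices i ≠ j and a point u on the intersection of the boundary circles of Dᵢ and Dⱼ such that the angle ∠cᵢ u cⱼ is larger than 2π/3. -/

import Mathlib

set_option maxHeartbeats 1000000

section LensAngleAux
open EuclideanGeometry Metric Real Filter

local notation "⟪" x ", " y "⟫" => @inner ℝ _ _ x y

private abbrev E2' := EuclideanSpace ℝ (Fin 2)

/-- rotation by 90 degrees -/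
private noncomputable def Jrot (v : E2') : E2' := !₂[-(v 1), v 0]

private lemma Jrot_inner (v : E2') : ⟪v, Jrot v⟫ = 0 := by
  simp [Jrot, PiLp.inner_apply, Fin.sum_univ_two, RCLike.inner_apply]
  ring

private lemma Jrot_norm (v : E2') : ‖Jrot v‖ = ‖v‖ := by
  have h : ⟪Jrot v, Jrot v⟫ = ⟪v, v⟫ := by
    rw [PiLp.inner_apply, PiLp.inner_apply]
    simp [Jrot, PiLp.inner_apply, Fin.sum_univ_two, RCLike.inner_apply]
    ring
  have h1 := real_inner_self_eq_norm_sq (Jrot v)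
  have h2 := real_inner_self_eq_norm_sq v
  nlinarith [norm_nonneg (Jrot v), norm_nonneg v]

/-- If two circles cross "deeply" (center distance exceeding the `2π/3` lens
angle threshold) but still intersect, there is a crossing point with lens angle
bigger than `2π/3`. -/
private lemma exists_lens_point (c1 c2 : E2') (r1 r2 : ℝ) (h1 : 0 < r1) (h2 : 0 < r2)
    (hd2 : r1^2 + r2^2 + r1*r2 < dist c1 c2 ^ 2) (hdlt : dist c1 c2 < r1 + r2) :
    ∃ u : E2', dist u c1 = r1 ∧ dist u c2 = r2 ∧
      2 * Real.pi / 3 < EuclideanGeometry.angle c1 u c2 := by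
  set d := dist c1 c2 with hdd
  have hd0 : 0 < d := by nlinarith [dist_nonneg (x := c1) (y := c2)]
  set x : ℝ := (d^2 + r1^2 - r2^2) / (2*d) with hx
  have f1 : 0 < (r1+r2)^2 - d^2 := by nlinarith [dist_nonneg (x := c1) (y := c2)]
  have f2 : 0 < d^2 - (r1-r2)^2 := by nlinarith
  have hy2 : 0 < r1^2 - x^2 := by
    rw [hx, div_pow, sub_pos, div_lt_iff₀ (by positivity)]
    nlinarith [mul_pos f1 f2]
  set y : ℝ := Real.sqrt (r1^2 - x^2) with hyd
  have hysq : y^2 = r1^2 - x^2 := Real.sq_sqrt hy2.le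
  have h2xd : 2*x*d = d^2 + r1^2 - r2^2 := by rw [hx]; field_simp
  set w : E2' := c2 - c1 with hw
  have hnw : ‖w‖ = d := by rw [hw, hdd, dist_eq_norm, norm_sub_rev]
  set u : E2' := c1 + (x/d) • w + (y/d) • (Jrot w) with hu
  have key : ∀ a b : ℝ, ‖(a • w + b • (Jrot w) : E2')‖^2 = (a^2 + b^2) * d^2 := by
    intro a b
    have e1 : ‖(a • w : E2')‖^2 = a^2*d^2 := by
      rw [norm_smul, Real.norm_eq_abs, hnw, mul_pow, sq_abs]
    have e2 : ‖(b • Jrot w : E2')‖^2 = b^2*d^2 := by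
      rw [norm_smul, Real.norm_eq_abs, Jrot_norm, hnw, mul_pow, sq_abs]
    have e3 : ⟪(a • w : E2'), (b • Jrot w : E2')⟫ = 0 := by
      rw [real_inner_smul_left, real_inner_smul_right, Jrot_inner]; ring
    rw [norm_add_sq_real, e1, e2, e3]; ring
  have hu1 : dist u c1 = r1 := by
    have hd : u - c1 = (x/d) • w + (y/d) • (Jrot w) := by rw [hu]; abel
    have hsq : dist u c1 ^ 2 = r1 ^ 2 := by
      rw [dist_eq_norm, hd, key]
      have e : ((x/d)^2 + (y/d)^2) * d^2 = x^2 + y^2 := by field_simp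
      rw [e]; linarith
    nlinarith [dist_nonneg (x := u) (y := c1)]
  have hu2 : dist u c2 = r2 := by
    have hd : u - c2 = (x/d - 1) • w + (y/d) • (Jrot w) := by
      rw [hu, hw, sub_smul, one_smul]; abel
    have hsq : dist u c2 ^ 2 = r2 ^ 2 := by
      rw [dist_eq_norm, hd, key]
      have e : ((x/d - 1)^2 + (y/d)^2) * d^2 = (x-d)^2 + y^2 := by field_simp
      rw [e]; nlinarith
    nlinarith [dist_nonneg (x := u) (y := c2)]
  refine ⟨u, hu1, hu2, ?_⟩
  have hlaw := EuclideanGeometry.law_cos c1 u c2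
  rw [dist_comm c1 u, dist_comm c2 u, hu1, hu2, ← hdd] at hlaw
  have hcos : Real.cos (EuclideanGeometry.angle c1 u c2) < -(1/2) := by
    nlinarith [mul_pos h1 h2]
  have h23 : Real.cos (2 * Real.pi / 3) = -(1/2) := by
    have e : 2 * Real.pi / 3 = Real.pi - Real.pi / 3 := by ring
    rw [e, Real.cos_pi_sub, Real.cos_pi_div_three]
  have hmem1 : 2 * Real.pi / 3 ∈ Set.Icc (0:ℝ) Real.pi := by
    constructor <;> nlinarith [Real.pi_pos]
  have hmem2 : EuclideanGeometry.angle c1 u c2 ∈ Set.Icc (0:ℝ) Real.pi :=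
    ⟨EuclideanGeometry.angle_nonneg _ _ _, EuclideanGeometry.angle_le_pi _ _ _⟩
  by_contra hle
  push_neg at hle
  rcases lt_or_eq_of_le hle with hlt | heq
  · have := Real.strictAntiOn_cos hmem2 hmem1 hlt
    rw [h23] at this
    linarith
  · rw [heq, h23] at hcos; linarith

/-- If a nontrivial nonnegative combination of three vectors vanishes, two of
the (actually used) vectors make an angle of at least `2π/3`. -/
private lemma three_vector (v : Fin 3 → E2') (lam : Fin 3 → ℝ) (hnn : ∀ i, 0 ≤ lam i)
    (hsum : lam 0 + lam 1 + lam 2 = 1) (hv : ∀ i, 0 < lam i → v i ≠ 0)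
    (hzero : lam 0 • v 0 + lam 1 • v 1 + lam 2 • v 2 = 0) :
    ∃ i j, i ≠ j ∧ 0 < lam i ∧ 0 < lam j ∧
      ⟪v i, v j⟫ ≤ -(1/2) * (‖v i‖ * ‖v j‖) := by
  by_contra hcon
  push_neg at hcon
  have h0 : ⟪(lam 0 • v 0 + lam 1 • v 1 + lam 2 • v 2 : E2'),
      (lam 0 • v 0 + lam 1 • v 1 + lam 2 • v 2 : E2')⟫ = 0 := by
    rw [hzero]; exact inner_zero_right _
  simp only [inner_add_left, inner_add_right, real_inner_smul_left,
    real_inner_smul_right, real_inner_self_eq_norm_sq] at h0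
  have ns0 : ‖lam 0 • v 0‖^2 = (lam 0 * ‖v 0‖)^2 := by
    rw [norm_smul, Real.norm_eq_abs, mul_pow, mul_pow, sq_abs]
  have ns1 : ‖lam 1 • v 1‖^2 = (lam 1 * ‖v 1‖)^2 := by
    rw [norm_smul, Real.norm_eq_abs, mul_pow, mul_pow, sq_abs]
  have ns2 : ‖lam 2 • v 2‖^2 = (lam 2 * ‖v 2‖)^2 := by
    rw [norm_smul, Real.norm_eq_abs, mul_pow, mul_pow, sq_abs]
  rw [ns0, ns1, ns2] at h0
  have c01 := real_inner_comm (v 0) (v 1)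
  have c02 := real_inner_comm (v 0) (v 2)
  have c12 := real_inner_comm (v 1) (v 2)
  have hexp : (lam 0 * ‖v 0‖)^2 + (lam 1 * ‖v 1‖)^2 + (lam 2 * ‖v 2‖)^2
      + 2*(lam 0 * lam 1 * ⟪v 0, v 1⟫ + lam 0 * lam 2 * ⟪v 0, v 2⟫
          + lam 1 * lam 2 * ⟪v 1, v 2⟫) = 0 := by
    linear_combination h0 - lam 0 * lam 1 * c01 - lam 0 * lam 2 * c02 - lam 1 * lam 2 * c12
  have hb : ∀ i j : Fin 3, i ≠ j →
      -((lam i * ‖v i‖) * (lam j * ‖v j‖))/2 ≤ lam i * lam j * ⟪v i, v j⟫ := by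
    intro i j hij
    rcases (hnn i).lt_or_eq with hi | hi
    · rcases (hnn j).lt_or_eq with hj | hj
      · have := hcon i j hij hi hj
        nlinarith [mul_pos hi hj]
      · rw [← hj]; simp
    · rw [← hi]; simp
  have sq01 := sq_nonneg (lam 0 * ‖v 0‖ - lam 1 * ‖v 1‖)
  have sq02 := sq_nonneg (lam 0 * ‖v 0‖ - lam 2 * ‖v 2‖)
  have sq12 := sq_nonneg (lam 1 * ‖v 1‖ - lam 2 * ‖v 2‖)
  have hb01 := hb 0 1 (by decide)
  have hb02 := hb 0 2 (by decide)
  have hb12 := hb 1 2 (by decide)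
  have main01 : 0 < lam 0 → 0 < lam 1 → False := by
    intro hi hj
    have hni : 0 < ‖v 0‖ := norm_pos_iff.mpr (hv 0 hi)
    have hnj : 0 < ‖v 1‖ := norm_pos_iff.mpr (hv 1 hj)
    have hc := hcon 0 1 (by decide) hi hj
    have hstrict : -((lam 0 * ‖v 0‖) * (lam 1 * ‖v 1‖))/2 < lam 0 * lam 1 * ⟪v 0, v 1⟫ := by
      nlinarith [mul_pos hi hj]
    nlinarith [hexp, hstrict, hb02, hb12, sq01, sq02, sq12]
  have main02 : 0 < lam 0 → 0 < lam 2 → False := by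
    intro hi hj
    have hni : 0 < ‖v 0‖ := norm_pos_iff.mpr (hv 0 hi)
    have hnj : 0 < ‖v 2‖ := norm_pos_iff.mpr (hv 2 hj)
    have hc := hcon 0 2 (by decide) hi hj
    have hstrict : -((lam 0 * ‖v 0‖) * (lam 2 * ‖v 2‖))/2 < lam 0 * lam 2 * ⟪v 0, v 2⟫ := by
      nlinarith [mul_pos hi hj]
    nlinarith [hexp, hstrict, hb01, hb12, sq01, sq02, sq12]
  have main12 : 0 < lam 1 → 0 < lam 2 → False := by
    intro hi hj
    have hni : 0 < ‖v 1‖ := norm_pos_iff.mpr (hv 1 hi)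
    have hnj : 0 < ‖v 2‖ := norm_pos_iff.mpr (hv 2 hj)
    have hc := hcon 1 2 (by decide) hi hj
    have hstrict : -((lam 1 * ‖v 1‖) * (lam 2 * ‖v 2‖))/2 < lam 1 * lam 2 * ⟪v 1, v 2⟫ := by
      nlinarith [mul_pos hi hj]
    nlinarith [hexp, hstrict, hb01, hb02, sq01, sq02, sq12]
  rcases (hnn 0).lt_or_eq with h0p | h0z
  · rcases (hnn 1).lt_or_eq with h1p | h1z
    · exact main01 h0p h1p
    · rcases (hnn 2).lt_or_eq with h2p | h2z
      · exact main02 h0p h2p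
      · have hz : lam 0 • v 0 = 0 := by
          rw [← h1z, ← h2z] at hzero; simpa using hzero
        rcases smul_eq_zero.mp hz with h | h
        · exact absurd h (ne_of_gt h0p)
        · exact hv 0 h0p h
  · rcases (hnn 1).lt_or_eq with h1p | h1z
    · rcases (hnn 2).lt_or_eq with h2p | h2z
      · exact main12 h1p h2p
      · have hz : lam 1 • v 1 = 0 := by
          rw [← h0z, ← h2z] at hzero; simpa using hzero
        rcases smul_eq_zero.mp hz with h | h
        · exact absurd h (ne_of_gt h1p)
        · exact hv 1 h1p h
    · rcases (hnn 2).lt_or_eq with h2p | h2z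
      · have hz : lam 2 • v 2 = 0 := by
          rw [← h0z, ← h1z] at hzero; simpa using hzero
        rcases smul_eq_zero.mp hz with h | h
        · exact absurd h (ne_of_gt h2p)
        · exact hv 2 h2p h
      · rw [← h0z, ← h1z, ← h2z] at hsum; norm_num at hsum

/-- Pull back a convex-hull representation of `0` to weights on the indices. -/
private lemma weights_of_hull (A : Set (Fin 3)) (φ : Fin 3 → E2')
    (h0 : (0:E2') ∈ convexHull ℝ ((fun i => φ i) '' A)) :
    ∃ lam : Fin 3 → ℝ, (∀ i, 0 ≤ lam i) ∧ (∑ i, lam i) = 1 ∧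
      (∀ i, 0 < lam i → i ∈ A) ∧ ∑ i, lam i • φ i = 0 := by
  classical
  rw [convexHull_eq] at h0
  obtain ⟨ι, t, w, z, hw0, hw1, hz, hcm⟩ := h0
  have hψ : ∀ k ∈ t, ∃ i, i ∈ A ∧ φ i = z k := fun k hk => hz k hk
  set ψ : ι → Fin 3 := fun k => if h : k ∈ t then (hψ k h).choose else 0 with hψd
  have hψA : ∀ k ∈ t, ψ k ∈ A := by
    intro k hk; simp only [hψd, dif_pos hk]; exact (hψ k hk).choose_spec.1
  have hψφ : ∀ k ∈ t, φ (ψ k) = z k := by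
    intro k hk; simp only [hψd, dif_pos hk]; exact (hψ k hk).choose_spec.2
  refine ⟨fun j => ∑ k ∈ t.filter (fun k => ψ k = j), w k, ?_, ?_, ?_, ?_⟩
  · intro i
    exact Finset.sum_nonneg fun k hk => hw0 k (Finset.mem_filter.mp hk).1
  · rw [Finset.sum_fiberwise_of_maps_to (fun k _ => Finset.mem_univ (ψ k))]
    exact hw1
  · intro i hi
    by_contra hiA
    have he : (t.filter (fun k => ψ k = i)) = ∅ := by
      rw [Finset.filter_eq_empty_iff]
      intro k hk hki
      exact hiA (hki ▸ hψA k hk)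
    simp only [he, Finset.sum_empty] at hi
    exact lt_irrefl 0 hi
  · have e1 : ∀ j : Fin 3, (∑ k ∈ t.filter (fun k => ψ k = j), w k) • φ j
        = ∑ k ∈ t.filter (fun k => ψ k = j), w k • z k := by
      intro j
      rw [Finset.sum_smul]
      refine Finset.sum_congr rfl fun k hk => ?_
      obtain ⟨hkt, hkj⟩ := Finset.mem_filter.mp hk
      rw [← hkj, hψφ k hkt]
    calc (∑ j, (∑ k ∈ t.filter (fun k => ψ k = j), w k) • φ j)
        = ∑ j, ∑ k ∈ t.filter (fun k => ψ k = j), w k • z k :=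
          Finset.sum_congr rfl fun j _ => e1 j
      _ = ∑ k ∈ t, w k • z k :=
          Finset.sum_fiberwise_of_maps_to (fun k _ => Finset.mem_univ (ψ k)) _
      _ = 0 := by
          rw [← hcm, Finset.centerMass, hw1]; simp

private noncomputable def gfun (c : E2') (r : ℝ) (q : E2') : ℝ := dist q c ^ 2 - r ^ 2

private noncomputable def Ffun (c : Fin 3 → E2') (r : Fin 3 → ℝ) (q : E2') : ℝ :=
  max (max (gfun (c 0) (r 0) q) (gfun (c 1) (r 1) q)) (gfun (c 2) (r 2) q)

private lemma gfun_le_Ffun (c : Fin 3 → E2') (r : Fin 3 → ℝ) (q : E2') (i : Fin 3) :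
    gfun (c i) (r i) q ≤ Ffun c r q := by
  fin_cases i
  · exact le_trans (le_max_left _ _) (le_max_left _ _)
  · exact le_trans (le_max_right _ _) (le_max_left _ _)
  · exact le_max_right _ _

private lemma continuous_gfun (c : E2') (r : ℝ) : Continuous (gfun c r) := by
  unfold gfun
  exact ((Continuous.dist continuous_id continuous_const).pow 2).sub continuous_const

private lemma continuous_Ffun (c : Fin 3 → E2') (r : Fin 3 → ℝ) : Continuous (Ffun c r) := by
  unfold Ffun
  exact ((continuous_gfun _ _).max (continuous_gfun _ _)).max (continuous_gfun _ _)

private lemma exists_min (c : Fin 3 → E2') (r : Fin 3 → ℝ) :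
    ∃ p : E2', ∀ q : E2', Ffun c r p ≤ Ffun c r q := by
  set M := Ffun c r (c 0) with hM
  have hM0 : -(r 0)^2 ≤ M := by
    have := gfun_le_Ffun c r (c 0) 0
    simpa [gfun] using this
  set R := Real.sqrt (M + r 0 ^ 2 + 1) with hR
  have hR0 : 0 ≤ R := Real.sqrt_nonneg _
  have hRsq : R^2 = M + r 0 ^ 2 + 1 := Real.sq_sqrt (by linarith)
  obtain ⟨p, hpK, hpmin⟩ := (isCompact_closedBall (c 0) R).exists_isMinOn
    ⟨c 0, mem_closedBall_self hR0⟩ (continuous_Ffun c r).continuousOn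
  refine ⟨p, fun q => ?_⟩
  by_cases hq : q ∈ closedBall (c 0) R
  · exact hpmin hq
  · have hd : R < dist q (c 0) := by
      simpa [mem_closedBall] using hq
    have h1 : Ffun c r p ≤ M := hpmin (mem_closedBall_self hR0)
    have h2 : gfun (c 0) (r 0) q ≤ Ffun c r q := gfun_le_Ffun c r q 0
    have h3 : M + 1 ≤ gfun (c 0) (r 0) q := by
      simp only [gfun]
      nlinarith [dist_nonneg (x := q) (y := c 0)]
    linarith

/-- At a global minimizer of the max-power function, `0` lies in the convex
hull of the active gradients; i.e., suitable weights exist. -/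
private lemma min_weights (c : Fin 3 → E2') (r : Fin 3 → ℝ) (p : E2')
    (hmin : ∀ q : E2', Ffun c r p ≤ Ffun c r q) :
    ∃ lam : Fin 3 → ℝ, (∀ i, 0 ≤ lam i) ∧ (∑ i, lam i) = 1 ∧
      (∀ i, 0 < lam i → gfun (c i) (r i) p = Ffun c r p) ∧
      ∑ i, lam i • (p - c i) = 0 := by
  classical
  set m := Ffun c r p with hm
  set A : Set (Fin 3) := {i | gfun (c i) (r i) p = m} with hA
  have h0 : (0:E2') ∈ convexHull ℝ ((fun i => p - c i) '' A) := by
    by_contra h0n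
    have hSfin : ((fun i => p - c i) '' A).Finite := A.toFinite.image _
    obtain ⟨f, u, hfu, hu0⟩ := geometric_hahn_banach_closed_point
      (convex_convexHull ℝ _) (hSfin.isClosed_convexHull (𝕜 := ℝ)) h0n
    rw [map_zero] at hu0
    set w : E2' := (InnerProductSpace.toDual ℝ E2').symm f with hwdef
    have hwy : ∀ y : E2', ⟪w, y⟫ = f y := fun y => InnerProductSpace.toDual_symm_apply
    have hwA : ∀ i, i ∈ A → ⟪w, p - c i⟫ < 0 := by
      intro i hi
      rw [hwy]
      exact lt_trans (hfu _ (subset_convexHull ℝ _ ⟨i, hi, rfl⟩)) hu0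
    have hle : ∀ i, gfun (c i) (r i) p ≤ m := fun i => gfun_le_Ffun c r p i
    have hev : ∀ i : Fin 3, ∀ᶠ s in nhdsWithin (0:ℝ) (Set.Ioi 0),
        gfun (c i) (r i) (p + s • w) < m := by
      intro i
      rcases eq_or_lt_of_le (hle i) with hact | hin
      · have hwi : ⟪w, p - c i⟫ < 0 := hwA i hact
        have hq : ∀ s : ℝ, gfun (c i) (r i) (p + s • w)
            = m + s * (2*⟪p - c i, w⟫ + s*‖w‖^2) := by
          intro s
          have e : p + s • w - c i = (p - c i) + s • w := by abel
          have e2 : ‖p - c i‖^2 = gfun (c i) (r i) p + r i^2 := by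
            simp [gfun, dist_eq_norm]
          simp only [gfun, dist_eq_norm, e]
          rw [norm_add_sq_real, real_inner_smul_right, norm_smul, Real.norm_eq_abs,
            mul_pow, sq_abs]
          have e3 : ‖p - c i‖^2 = m + r i^2 := by rw [e2, hact]
          rw [e3]; ring
        have hcont : Continuous fun s : ℝ => 2*⟪p - c i, w⟫ + s*‖w‖^2 := by
          continuity
        have h2' : Tendsto (fun s : ℝ => 2*⟪p - c i, w⟫ + s*‖w‖^2) (nhds 0)
            (nhds (2*⟪p - c i, w⟫)) := by
          have := hcont.tendsto 0
          simpa using this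
        have hwi' : 2*⟪p - c i, w⟫ < 0 := by
          have := real_inner_comm w (p - c i)
          linarith
        have h2 : ∀ᶠ s in nhds (0:ℝ), 2*⟪p - c i, w⟫ + s*‖w‖^2 < 0 :=
          h2'.eventually_lt_const hwi'
        filter_upwards [eventually_mem_nhdsWithin, h2.filter_mono nhdsWithin_le_nhds]
          with s hs1 hs2
        rw [hq]
        have : s * (2*⟪p - c i, w⟫ + s*‖w‖^2) < 0 := mul_neg_of_pos_of_neg hs1 hs2
        linarith
      · have hcont : Continuous fun s : ℝ => gfun (c i) (r i) (p + s • w) :=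
          (continuous_gfun _ _).comp (by continuity)
        have h2' : Tendsto (fun s : ℝ => gfun (c i) (r i) (p + s • w)) (nhds 0)
            (nhds (gfun (c i) (r i) p)) := by
          have := hcont.tendsto 0
          simpa using this
        exact (h2'.eventually_lt_const hin).filter_mono nhdsWithin_le_nhds
    obtain ⟨s, hs0, hs1, hs2⟩ := ((hev 0).and ((hev 1).and (hev 2))).exists
    have hFs : Ffun c r (p + s • w) < m := by
      simp only [Ffun]
      exact max_lt (max_lt hs0 hs1) hs2
    exact absurd (hmin (p + s • w)) (not_le.mpr hFs)
  obtain ⟨lam, h1, h2, h3, h4⟩ := weights_of_hull A _ h0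
  exact ⟨lam, h1, h2, fun i hi => h3 i hi, h4⟩

end LensAngleAux

/-- **A non-Helly triple of disks contains a pair with large lens angle.**
Let `D₁, D₂, D₃` be closed disks in `ℝ²` (centers `c i`, positive radii `r i`) such
that each pairwise intersection has nonempty interior but the common intersection is
empty.  Then there are indices `i ≠ j` and a point `u` on the intersection of the
boundary circles of `D i` and `D j` with `∠ (c i) u (c j) > 2π/3`. -/
theorem nonHelly_triple_has_large_lens_angle
    (c : Fin 3 → EuclideanSpace ℝ (Fin 2)) (r : Fin 3 → ℝ)
    (hr : ∀ i, 0 < r i)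
    (hpair : ∀ i j, i ≠ j →
      (interior (Metric.closedBall (c i) (r i) ∩ Metric.closedBall (c j) (r j))).Nonempty)
    (hempty : Metric.closedBall (c 0) (r 0) ∩ Metric.closedBall (c 1) (r 1) ∩
      Metric.closedBall (c 2) (r 2) = ∅) :
    ∃ i j, i ≠ j ∧ ∃ u : EuclideanSpace ℝ (Fin 2),
      dist u (c i) = r i ∧ dist u (c j) = r j ∧
      2 * Real.pi / 3 < EuclideanGeometry.angle (c i) u (c j) := by
  obtain ⟨p, hmin⟩ := exists_min c r
  set m := Ffun c r p with hm
  -- the minimum value is positive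
  have hmpos : 0 < m := by
    by_contra hcontra
    push_neg at hcontra
    have hin : ∀ i, p ∈ Metric.closedBall (c i) (r i) := by
      intro i
      have h1 := gfun_le_Ffun c r p i
      rw [← hm] at h1
      simp only [gfun] at h1
      have h2 : dist p (c i) ≤ r i := by
        nlinarith [dist_nonneg (x := p) (y := c i), hr i]
      exact Metric.mem_closedBall.mpr h2
    have : p ∈ (∅ : Set (EuclideanSpace ℝ (Fin 2))) := hempty ▸ ⟨⟨hin 0, hin 1⟩, hin 2⟩
    exact this
  obtain ⟨lam, h1, h2, h3, h4⟩ := min_weights c r p hmin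
  rw [Fin.sum_univ_three] at h2 h4
  have hvne : ∀ i, 0 < lam i → p - c i ≠ 0 := by
    intro i hi hz
    have hgi := h3 i hi
    rw [← hm] at hgi
    have : dist p (c i) = 0 := by
      rw [dist_eq_norm, hz, norm_zero]
    simp only [gfun, this] at hgi
    nlinarith [hr i]
  obtain ⟨i, j, hij, hi, hj, hinner⟩ :=
    three_vector (fun i => p - c i) lam h1 h2 hvne (by simpa using h4)
  have hgi := h3 i hi
  have hgj := h3 j hj
  rw [← hm] at hgi hgj
  simp only [gfun] at hgi hgj
  have hdi : dist p (c i) = ‖p - c i‖ := dist_eq_norm _ _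
  have hdj : dist p (c j) = ‖p - c j‖ := dist_eq_norm _ _
  have hni : r i < ‖p - c i‖ := by
    nlinarith [norm_nonneg (p - c i), hr i, hdi ▸ hgi]
  have hnj : r j < ‖p - c j‖ := by
    nlinarith [norm_nonneg (p - c j), hr j, hdj ▸ hgj]
  have hd2 : r i^2 + r j^2 + r i * r j < dist (c i) (c j) ^ 2 := by
    have e : dist (c i) (c j) = ‖(p - c j) - (p - c i)‖ := by
      rw [dist_eq_norm]
      congr 1
      abel
    rw [e, norm_sub_sq_real]
    have hc := real_inner_comm (p - c i) (p - c j)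
    nlinarith [hr i, hr j, hni, hnj, norm_nonneg (p - c i), norm_nonneg (p - c j),
      mul_pos (hr i) (hr j)]
  have hdlt : dist (c i) (c j) < r i + r j := by
    obtain ⟨q, hq⟩ := hpair i j hij
    rw [interior_inter, interior_closedBall (c i) (hr i).ne',
      interior_closedBall (c j) (hr j).ne'] at hq
    have hq1 : dist q (c i) < r i := Metric.mem_ball.mp hq.1
    have hq2 : dist q (c j) < r j := Metric.mem_ball.mp hq.2
    calc dist (c i) (c j) ≤ dist (c i) q + dist q (c j) := dist_triangle _ _ _
      _ < r i + r j := by rw [dist_comm (c i) q]; linarith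
  obtain ⟨u, hu1, hu2, hu3⟩ := exists_lens_point (c i) (c j) (r i) (r j)
    (hr i) (hr j) hd2 hdlt
  exact ⟨i, j, hij, u, hu1, hu2, hu3⟩
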